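/- In the directed graph constructed from a 3-CNF formula Φ with m clauses (vertices r, s, s', t plus one vertex per literal occurrence v_{ik}; arcs (r,s), (r,s'), (s, v_{1j}), (v_{ij}, v_{i+1,k}) for all layers, (v_{mj}, t), and (s', v_{ij}) for all i,j; precedence pairs (t,s') and (v_{hk}, v_{ij}) for h > i whenever the two literals refer to the same variable with exactly one negated), if Φ is satisfiable then there exists a spanning arborescence rooted at r in which no precedence pair (a,b) ∈ R has b on the path from r to a. -/

import Mathlib

def IsPathIn {V : Type*} (T : Set (V × V)) (r j : V) (p : List V) : Prop :=
  p.head? = some r ∧ p.getLast? = some j ∧ p.Chain' (fun a b => (a, b) ∈ T)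

def IsSpanningArborescence {V : Type*} (T : Set (V × V)) (r : V) : Prop :=
  (∀ j : V, j ≠ r → ∃! i : V, (i, j) ∈ T) ∧ (∀ i : V, (i, r) ∉ T) ∧
    ∀ j : V, ∃! p : List V, IsPathIn T r j p

/-- Vertices of the graph built from a 3-CNF formula with `m + 1` clauses:
`root`, `s`, `s'`, `t`, plus a vertex `lit i k` for the `k`-th literal of clause `i`. -/
inductive SatVert (m : ℕ) : Type
  | root | s | s' | t
  | lit (i : Fin (m + 1)) (k : Fin 3)
  deriving DecidableEq

/-- Arcs of the layered graph of the reduction (Theorem 1). -/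
def SatArcs (m : ℕ) : Set (SatVert m × SatVert m) :=
  {a | a = (SatVert.root, SatVert.s) ∨ a = (SatVert.root, SatVert.s') ∨
    (∃ j : Fin 3, a = (SatVert.s, SatVert.lit 0 j)) ∨
    (∃ (i : Fin m) (j k : Fin 3), a = (SatVert.lit i.castSucc j, SatVert.lit i.succ k)) ∨
    (∃ j : Fin 3, a = (SatVert.lit (Fin.last m) j, SatVert.t)) ∨
    (∃ (i : Fin (m + 1)) (j : Fin 3), a = (SatVert.s', SatVert.lit i j))}

/-- Precedence pairs of the reduction: `(t, s')`, plus `(lit h k, lit i j)` whenever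
`h > i` and the two literals refer to the same variable with exactly one negated.
Clause `i` is given by `C i : Fin 3 → ℕ × Bool` (variable index and sign). -/
def SatPrec (m : ℕ) (C : Fin (m + 1) → Fin 3 → ℕ × Bool) : Set (SatVert m × SatVert m) :=
  {a | a = (SatVert.t, SatVert.s') ∨
    ∃ (h i : Fin (m + 1)) (k j : Fin 3), (i : ℕ) < (h : ℕ) ∧
      (C h k).1 = (C i j).1 ∧ (C h k).2 ≠ (C i j).2 ∧
      a = (SatVert.lit h k, SatVert.lit i j)}

namespace Stmt7Aux

open SatVert

variable {m : ℕ}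

def parent (k : Fin (m + 1) → Fin 3) : SatVert m → SatVert m
  | .root => .root
  | .s => .root
  | .s' => .root
  | .t => .lit (Fin.last m) (k (Fin.last m))
  | .lit i j =>
    if j = k i then
      if h : i = 0 then .s
      else .lit ((i.pred h).castSucc) (k ((i.pred h).castSucc))
    else .s'

def dep (k : Fin (m + 1) → Fin 3) : SatVert m → ℕ
  | .root => 0
  | .s => 1
  | .s' => 1
  | .t => m + 3
  | .lit i j => if j = k i then i + 2 else 2

lemma dep_parent_lt (k : Fin (m + 1) → Fin 3) (v : SatVert m) (hv : v ≠ root) :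
    dep k (parent k v) < dep k v := by
  cases v with
  | root => exact absurd rfl hv
  | s => simp [dep, parent]
  | s' => simp [dep, parent]
  | t =>
    simp only [dep, parent, if_pos rfl]
    simp [Fin.val_last]
  | lit i j =>
    by_cases hj : j = k i
    · simp only [parent, dep, if_pos hj]
      by_cases hi : i = 0
      · simp [hi, dep, dif_pos hi]
      · simp only [dif_neg hi, dep, if_pos rfl, Fin.coe_castSucc, Fin.coe_pred, if_true,
          eq_self_iff_true]
        have : (i : ℕ) ≠ 0 := fun h => hi (Fin.ext h)
        omega
    · simp [parent, dep, if_neg hj]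

def path (k : Fin (m + 1) → Fin 3) (v : SatVert m) : List (SatVert m) :=
  if _h : v = root then [root] else path k (parent k v) ++ [v]
termination_by dep k v
decreasing_by exact dep_parent_lt k v _h

def Tree (k : Fin (m + 1) → Fin 3) : Set (SatVert m × SatVert m) :=
  {a | a.2 ≠ root ∧ a.1 = parent k a.2}

lemma tree_sub (k : Fin (m + 1) → Fin 3) : Tree k ⊆ SatArcs m := by
  rintro ⟨a, b⟩ ⟨hb, ha⟩
  obtain rfl : a = parent k b := ha
  cases b with
  | root => exact absurd rfl hb
  | s => exact Or.inl rfl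
  | s' => exact Or.inr (Or.inl rfl)
  | t => exact Or.inr (Or.inr (Or.inr (Or.inr (Or.inl ⟨_, rfl⟩))))
  | lit i j =>
    by_cases hj : j = k i
    · by_cases hi : i = 0
      · refine Or.inr (Or.inr (Or.inl ⟨j, ?_⟩))
        subst hi; simp [parent, hj]
      · refine Or.inr (Or.inr (Or.inr (Or.inl ⟨i.pred hi, k ((i.pred hi).castSucc), j, ?_⟩)))
        simp [parent, if_pos hj, dif_neg hi, Fin.succ_pred]
    · exact Or.inr (Or.inr (Or.inr (Or.inr (Or.inr ⟨i, j, by simp [parent, if_neg hj]⟩))))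

lemma path_root (k : Fin (m + 1) → Fin 3) : path k (root : SatVert m) = [root] := by
  rw [path]; simp

lemma path_of_ne (k : Fin (m + 1) → Fin 3) {v : SatVert m} (hv : v ≠ root) :
    path k v = path k (parent k v) ++ [v] := by
  rw [path]; simp [hv]

lemma path_ne_nil (k : Fin (m + 1) → Fin 3) (v : SatVert m) : path k v ≠ [] := by
  by_cases hv : v = root
  · subst hv; rw [path_root]; simp
  · rw [path_of_ne k hv]; simp

lemma path_getLast (k : Fin (m + 1) → Fin 3) (v : SatVert m) :
    (path k v).getLast? = some v := by
  by_cases hv : v = root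
  · subst hv; rw [path_root]; rfl
  · rw [path_of_ne k hv]; simp

lemma path_head (k : Fin (m + 1) → Fin 3) (v : SatVert m) :
    (path k v).head? = some root := by
  suffices H : ∀ n (v : SatVert m), dep k v = n → (path k v).head? = some root from H _ v rfl
  intro n
  induction n using Nat.strong_induction_on with
  | _ n ih =>
  intro v hn
  by_cases hv : v = root
  · subst hv; rw [path_root]; rfl
  · rw [path_of_ne k hv]
    have := ih _ (hn ▸ dep_parent_lt k v hv) (parent k v) rfl
    rw [List.head?_append, this]
    rfl

lemma path_chain (k : Fin (m + 1) → Fin 3) (v : SatVert m) :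
    (path k v).Chain' (fun a b => (a, b) ∈ Tree k) := by
  suffices H : ∀ n (v : SatVert m), dep k v = n →
      (path k v).Chain' (fun a b => (a, b) ∈ Tree k) from H _ v rfl
  intro n
  induction n using Nat.strong_induction_on with
  | _ n ih =>
  intro v hn
  by_cases hv : v = root
  · subst hv; rw [path_root]; exact List.isChain_singleton _
  · rw [path_of_ne k hv]; change List.IsChain _ _; rw [List.isChain_append]
    refine ⟨ih _ (hn ▸ dep_parent_lt k v hv) (parent k v) rfl, List.isChain_singleton _, ?_⟩
    intro x hx y hy
    rw [path_getLast] at hx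
    simp only [List.head?_cons] at hy
    cases hx; cases hy
    exact ⟨hv, rfl⟩

lemma path_isPathIn (k : Fin (m + 1) → Fin 3) (v : SatVert m) :
    IsPathIn (Tree k) root v (path k v) :=
  ⟨path_head k v, path_getLast k v, path_chain k v⟩

lemma path_unique (k : Fin (m + 1) → Fin 3) (v : SatVert m) (p : List (SatVert m))
    (hp : IsPathIn (Tree k) root v p) : p = path k v := by
  suffices H : ∀ n (v : SatVert m) (p : List (SatVert m)), p.length = n →
      IsPathIn (Tree k) root v p → p = path k v from H _ v p rfl hp
  intro n
  induction n using Nat.strong_induction_on with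
  | _ n ih =>
  rintro v p hn ⟨hhead, hlast, hchain⟩
  rcases List.eq_nil_or_concat p with rfl | ⟨q, v', rfl⟩
  · simp at hhead
  · simp only [List.concat_eq_append] at hn hhead hlast hchain ⊢
    rw [List.getLast?_concat] at hlast
    cases hlast
    rcases List.eq_nil_or_concat q with rfl | ⟨q', w, rfl⟩
    · simp only [List.nil_append, List.head?_cons] at hhead
      cases hhead
      simp [path_root]
    · simp only [List.concat_eq_append] at hn hhead hchain ⊢
      change List.IsChain _ _ at hchain; rw [List.isChain_append] at hchain
      obtain ⟨hcq, -, hstep⟩ := hchain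
      have hwv : (w, v) ∈ Tree k := by
        refine hstep w ?_ v rfl
        simp
      obtain ⟨hvroot, hw⟩ := hwv
      have hq : (q' ++ [w]) = path k (parent k v) := by
        refine ih (q' ++ [w]).length ?_ (parent k v) (q' ++ [w]) rfl
          ⟨?_, ?_, hcq⟩
        · subst hn; simp
        · rw [List.head?_append, List.head?_eq_head (by simp)] at hhead
          rw [List.head?_eq_head (by simp)]
          exact hhead
        · rw [List.getLast?_concat, ← hw]
      rw [hq, ← path_of_ne k hvroot]

lemma mem_path_lit (k : Fin (m + 1) → Fin 3) (h : Fin (m + 1)) (x : SatVert m)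
    (hx : x ∈ path k (.lit h (k h))) :
    x = root ∨ x = s ∨ ∃ i : Fin (m + 1), (i : ℕ) ≤ (h : ℕ) ∧ x = lit i (k i) := by
  suffices H : ∀ n (h : Fin (m + 1)), (h : ℕ) = n → ∀ x ∈ path k (SatVert.lit h (k h)),
      x = root ∨ x = s ∨ ∃ i : Fin (m + 1), (i : ℕ) ≤ (h : ℕ) ∧ x = lit i (k i) from
    H _ h rfl x hx
  intro n
  induction n using Nat.strong_induction_on with
  | _ n ih =>
  intro h hn x hx
  rw [path_of_ne k (by simp)] at hx
  rcases List.mem_append.1 hx with hx | hx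
  · by_cases hi : h = 0
    · subst hi
      have hp : parent k (SatVert.lit (0 : Fin (m + 1)) (k 0)) = s := by simp [parent]
      have hps : parent k (SatVert.s : SatVert m) = root := rfl
      rw [hp, path_of_ne k (by simp), hps, path_root] at hx
      rcases List.mem_append.1 hx with hx | hx
      · simp at hx; exact Or.inl hx
      · simp at hx; exact Or.inr (Or.inl hx)
    · have hne : (h : ℕ) ≠ 0 := fun h0 => hi (Fin.ext h0)
      have hp : parent k (SatVert.lit h (k h))
          = lit ((h.pred hi).castSucc) (k ((h.pred hi).castSucc)) := by
        simp [parent, dif_neg hi]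
      rw [hp] at hx
      have hlt : (((h.pred hi).castSucc : Fin (m + 1)) : ℕ) < n := by
        rw [← hn]; simp only [Fin.coe_castSucc, Fin.coe_pred]; omega
      rcases ih _ hlt _ rfl x hx with h1 | h2 | ⟨i, hi1, hi2⟩
      · exact Or.inl h1
      · exact Or.inr (Or.inl h2)
      · refine Or.inr (Or.inr ⟨i, ?_, hi2⟩)
        simp only [Fin.coe_castSucc, Fin.coe_pred] at hi1
        omega
  · simp only [List.mem_singleton] at hx
    exact Or.inr (Or.inr ⟨h, le_refl _, hx⟩)

end Stmt7Aux

/-- if the 3-CNF formula is satisfiable, then the constructed graph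
admits a spanning arborescence rooted at `root` in which no precedence pair
`(a,b) ∈ R` has `b` on the path from `root` to `a`. -/
theorem stmt7 (m : ℕ) (C : Fin (m + 1) → Fin 3 → ℕ × Bool)
    (hsat : ∃ σ : ℕ → Bool, ∀ i : Fin (m + 1), ∃ k : Fin 3, σ (C i k).1 = (C i k).2) :
    ∃ T : Set (SatVert m × SatVert m), T ⊆ SatArcs m ∧
      IsSpanningArborescence T SatVert.root ∧
      ∀ q ∈ SatPrec m C, ∀ p : List (SatVert m),
        IsPathIn T SatVert.root q.1 p → q.2 ∉ p := by

  classical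
  obtain ⟨σ, hσ⟩ := hsat
  choose k hk using hσ
  refine ⟨Stmt7Aux.Tree k, Stmt7Aux.tree_sub k, ⟨?_, ?_, ?_⟩, ?_⟩
  · intro j hj
    exact ⟨Stmt7Aux.parent k j, ⟨hj, rfl⟩, fun y hy => hy.2⟩
  · intro i h
    exact h.1 rfl
  · intro j
    exact ⟨Stmt7Aux.path k j, Stmt7Aux.path_isPathIn k j,
      fun p hp => Stmt7Aux.path_unique k j p hp⟩
  · rintro ⟨a, b⟩ hq p hp hmem
    rw [Stmt7Aux.path_unique k _ p hp] at hmem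
    simp only [SatPrec, Set.mem_setOf_eq] at hq
    rcases hq with hq | ⟨h, i, kk, j, hlt, hvar, hsign, hq⟩
    · obtain ⟨rfl, rfl⟩ : a = SatVert.t ∧ b = SatVert.s' := by
        simpa [Prod.ext_iff] using hq
      have hpt : Stmt7Aux.parent k (SatVert.t : SatVert m)
          = SatVert.lit (Fin.last m) (k (Fin.last m)) := rfl
      rw [Stmt7Aux.path_of_ne k (by simp), hpt] at hmem
      rcases List.mem_append.1 hmem with hx | hx
      · rcases Stmt7Aux.mem_path_lit k _ _ hx with h1 | h2 | ⟨i, -, h3⟩ <;> simp_all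
      · simp at hx
    · obtain ⟨rfl, rfl⟩ : a = SatVert.lit h kk ∧ b = SatVert.lit i j := by
        simpa [Prod.ext_iff] using hq
      by_cases hkk : kk = k h
      · subst hkk
        rcases Stmt7Aux.mem_path_lit k _ _ hmem with h1 | h2 | ⟨i', -, h3⟩
        · simp at h1
        · simp at h2
        · obtain ⟨rfl, rfl⟩ : i = i' ∧ j = k i' := by
            simpa [SatVert.lit.injEq] using h3
          apply hsign
          rw [← hk h, hvar, hk i]
      · have hps : Stmt7Aux.parent k (SatVert.lit h kk) = SatVert.s' := by
          simp [Stmt7Aux.parent, if_neg hkk]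
        have hps' : Stmt7Aux.parent k (SatVert.s' : SatVert m) = SatVert.root := rfl
        rw [Stmt7Aux.path_of_ne k (by simp), hps,
          Stmt7Aux.path_of_ne k (by simp), hps', Stmt7Aux.path_root] at hmem
        simp only [List.mem_append, List.mem_singleton, List.mem_cons,
          List.not_mem_nil, or_false] at hmem
        rcases hmem with (h1 | h2) | h3 <;> simp_all
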